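/- Let n = 2p + 1 with p ≥ 1 an integer, set a_n = n^{1/(n-1)} - 1 and α_j = sin(2jπ/n)/(1 - cos(2jπ/n)) for 1 ≤ j ≤ n - 1. Let a be a real number with a_{2p+1} < a < 1 and let b > 0 satisfy b < (a_{2p+1}/2)·α_p. Then every v ∈ ℂ with Re v < a/2 - b satisfies |(v - a)^{2p+1} - v^{2p+1}| > (2p+1)·a_{2p+1}^{p+1}·(b·√3/3)^p. -/

import Mathlib

open Real Complex

private lemma aux_quad (x y c : ℝ) : 4*c^2*x^2 ≤ (x^2+(y-c)^2)*(x^2+(y+c)^2) := by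
  nlinarith [sq_nonneg (x^2+y^2-c^2)]

private lemma cover_prod {M : Type*} [CommMonoid M] (p : ℕ) (F : ℕ → M) (e₁ e₂ : ℕ → ℕ)
    (h₁ : ∀ a ∈ Finset.Ico 1 (p+1), ∀ b ∈ Finset.Ico 1 (p+1), e₁ a = e₁ b → a = b)
    (h₂ : ∀ a ∈ Finset.Ico 1 (p+1), ∀ b ∈ Finset.Ico 1 (p+1), e₂ a = e₂ b → a = b)
    (hdisj : Disjoint ((Finset.Ico 1 (p+1)).image e₁) ((Finset.Ico 1 (p+1)).image e₂))
    (hcover : ((Finset.Ico 1 (p+1)).image e₁) ∪ ((Finset.Ico 1 (p+1)).image e₂)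
      = Finset.Ico 1 (2*p+1)) :
    ∏ k ∈ Finset.Ico 1 (2*p+1), F k
      = ∏ j ∈ Finset.Ico 1 (p+1), (F (e₁ j) * F (e₂ j)) := by
  rw [Finset.prod_mul_distrib, ← Finset.prod_image h₁, ← Finset.prod_image h₂,
    ← Finset.prod_union hdisj, hcover]

private lemma prod_Ico_pair {M : Type*} [CommMonoid M] (p : ℕ) (F : ℕ → M) :
    ∏ k ∈ Finset.Ico 1 (2*p+1), F k
      = ∏ j ∈ Finset.Ico 1 (p+1), (F j * F (2*p+1-j)) := by
  apply cover_prod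
  · intro a ha b hb h; exact h
  · intro a ha b hb h
    simp only [Finset.mem_Ico] at ha hb; omega
  · rw [Finset.disjoint_left]
    intro k hk hk'
    simp only [Finset.mem_image, Finset.mem_Ico] at hk hk'
    obtain ⟨i, hi, rfl⟩ := hk
    obtain ⟨j, hj, hj'⟩ := hk'
    omega
  · ext k
    simp only [Finset.mem_union, Finset.mem_image, Finset.mem_Ico]
    constructor
    · rintro (⟨i, hi, rfl⟩ | ⟨i, hi, rfl⟩) <;> omega
    · intro hk
      rcases le_or_gt k p with h | h
      · exact Or.inl ⟨k, by omega, rfl⟩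
      · exact Or.inr ⟨2*p+1-k, by omega, by omega⟩

private lemma prod_Ico_even_odd {M : Type*} [CommMonoid M] (p : ℕ) (F : ℕ → M) :
    ∏ k ∈ Finset.Ico 1 (2*p+1), F k
      = ∏ j ∈ Finset.Ico 1 (p+1), (F (2*j) * F (2*p+1-2*j)) := by
  apply cover_prod
  · intro a ha b hb h; omega
  · intro a ha b hb h
    simp only [Finset.mem_Ico] at ha hb; omega
  · rw [Finset.disjoint_left]
    intro k hk hk'
    simp only [Finset.mem_image, Finset.mem_Ico] at hk hk'
    obtain ⟨i, hi, rfl⟩ := hk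
    obtain ⟨j, hj, hj'⟩ := hk'
    omega
  · ext k
    simp only [Finset.mem_union, Finset.mem_image, Finset.mem_Ico]
    constructor
    · rintro (⟨i, hi, rfl⟩ | ⟨i, hi, rfl⟩) <;> omega
    · intro hk
      rcases Nat.even_or_odd k with ⟨m, hm⟩ | ⟨m, hm⟩
      · exact Or.inl ⟨m, by omega, by omega⟩
      · exact Or.inr ⟨p - m, by omega, by omega⟩

private lemma pair_bound (a x c0 s : ℝ) (ha : 0 < a) (hx : 0 ≤ x) (hs : 0 < s)
    (hcs : s^2 + c0^2 = 1) (v w : ℂ) (hvre : v.re = a/2 - x)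
    (hwre : w.re = c0) (hwim : w.im = s) :
    2*a*x*s ≤ ‖(1-w)*v - (a:ℂ)‖ * ‖(1-(starRingEnd ℂ) w)*v - (a:ℂ)‖ := by
  have hD : (0:ℝ) < 2 - 2*c0 := by nlinarith
  have hu : (1 - w) ≠ 0 := by
    intro h
    have h2 : (1 - w).im = 0 := by rw [h]; simp
    rw [Complex.sub_im, Complex.one_im, hwim] at h2
    linarith
  have hu' : (1 - (starRingEnd ℂ) w) ≠ 0 := by
    intro h
    have h2 : (1 - (starRingEnd ℂ) w).im = 0 := by rw [h]; simp
    rw [Complex.sub_im, Complex.one_im, Complex.conj_im, hwim] at h2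
    linarith
  have huns : Complex.normSq (1 - w) = 2 - 2*c0 := by
    rw [Complex.normSq_apply, Complex.sub_re, Complex.sub_im, Complex.one_re, Complex.one_im,
      hwre, hwim]
    nlinarith
  set m : ℂ := (a:ℂ) / (1 - w) with hm
  have hmre : m.re = a/2 := by
    rw [hm, Complex.div_re, huns, Complex.sub_re, Complex.sub_im, Complex.one_re, Complex.one_im,
      Complex.ofReal_re, Complex.ofReal_im, hwre, hwim]
    have h1c : (1:ℝ) - c0 ≠ 0 := by linarith
    field_simp
    ring
  have hmim : m.im = a*s/(2-2*c0) := by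
    rw [hm, Complex.div_im, huns, Complex.sub_re, Complex.sub_im, Complex.one_re, Complex.one_im,
      Complex.ofReal_re, Complex.ofReal_im, hwre, hwim]
    have h1c : (1:ℝ) - c0 ≠ 0 := by linarith
    field_simp
    ring
  set c := a*s/(2-2*c0) with hc
  have hc0 : 0 < c := div_pos (by positivity) hD
  have hf1 : (1-w)*v - (a:ℂ) = (1-w)*(v - m) := by
    rw [hm]
    field_simp
  have hconjm : (starRingEnd ℂ) m = (a:ℂ)/(1 - (starRingEnd ℂ) w) := by
    rw [hm, map_div₀, Complex.conj_ofReal, map_sub, map_one]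
  have hf2 : (1-(starRingEnd ℂ) w)*v - (a:ℂ) = (1-(starRingEnd ℂ) w)*(v - (starRingEnd ℂ) m) := by
    rw [hconjm]
    field_simp
  have hcabs : ‖1 - (starRingEnd ℂ) w‖ = ‖1 - w‖ := by
    rw [show (1:ℂ) - (starRingEnd ℂ) w = (starRingEnd ℂ) (1 - w) by rw [map_sub, map_one]]
    exact Complex.norm_conj _
  set A := ‖v - m‖ * ‖v - (starRingEnd ℂ) m‖ with hA
  have hA0 : 0 ≤ A := mul_nonneg (norm_nonneg _) (norm_nonneg _)
  have hA2 : A^2 = (x^2 + (v.im - c)^2) * (x^2 + (v.im + c)^2) := by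
    rw [hA, mul_pow, Complex.sq_norm, Complex.sq_norm, Complex.normSq_apply, Complex.normSq_apply,
      Complex.sub_re, Complex.sub_im, Complex.sub_re, Complex.sub_im, Complex.conj_re,
      Complex.conj_im, hmre, hmim, hvre]
    ring
  have hAge : 2*c*x ≤ A := by
    nlinarith [aux_quad x v.im c, mul_nonneg (mul_nonneg hc0.le hx) hA0,
      mul_nonneg hc0.le hx]
  have hkey : Complex.normSq (1-w) * (2*c*x) = 2*a*x*s := by
    rw [huns, hc]
    have h1c : (1:ℝ) - c0 ≠ 0 := by linarith
    field_simp
  calc 2*a*x*s = Complex.normSq (1-w) * (2*c*x) := hkey.symm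
    _ ≤ Complex.normSq (1-w) * A := by
        exact mul_le_mul_of_nonneg_left hAge (Complex.normSq_nonneg _)
    _ = ‖(1-w)*v - (a:ℂ)‖ * ‖(1-(starRingEnd ℂ) w)*v - (a:ℂ)‖ := by
        rw [hf1, hf2, norm_mul, norm_mul, hcabs, ← Complex.sq_norm]
        ring

set_option maxHeartbeats 2000000 in
/-- Lemma 5 part 2 (odd case): if `a_{2p+1} < a < 1` and `0 < b < (a_{2p+1}/2)·α_p`,
then every `v` with `Re v < a/2 - b` satisfies
`|(v-a)^{2p+1} - v^{2p+1}| > (2p+1)·a_{2p+1}^{p+1}·(b√3/3)^p`. -/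
theorem stmt_14 (p : ℕ) (hp : 1 ≤ p) (n : ℕ) (hn : n = 2 * p + 1)
    (an : ℝ) (han : an = (n : ℝ) ^ ((1 : ℝ) / ((n : ℝ) - 1)) - 1)
    (α : ℕ → ℝ)
    (hα : ∀ j, 1 ≤ j → j ≤ n - 1 →
      α j = Real.sin (2 * j * Real.pi / n) / (1 - Real.cos (2 * j * Real.pi / n)))
    (a : ℝ) (ha : an < a) (ha1 : a < 1)
    (b : ℝ) (hb : 0 < b) (hbα : b < (an / 2) * α p) :
    ∀ v : ℂ, v.re < a / 2 - b →
      ‖(v - (a : ℝ)) ^ (2 * p + 1) - v ^ (2 * p + 1)‖ >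
        (2 * p + 1) * an ^ (p + 1) * (b * Real.sqrt 3 / 3) ^ p := by
  subst hn
  intro v hv
  have hNne : (2*p+1 : ℕ) ≠ 0 := by omega
  have hNpos : (0:ℕ) < 2*p+1 := by omega
  have hNR : (0:ℝ) < ((2*p+1:ℕ):ℝ) := by exact_mod_cast hNpos
  haveI : NeZero (2*p+1) := ⟨hNne⟩
  -- an > 0
  have han0 : 0 < an := by
    rw [han]
    have h1 : (1:ℝ) < ((2*p+1:ℕ):ℝ) := by
      push_cast; have : (1:ℝ) ≤ (p:ℝ) := by exact_mod_cast hp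
      linarith
    have h2 : (0:ℝ) < 1 / (((2*p+1:ℕ):ℝ) - 1) := by
      apply div_pos one_pos; linarith
    have := (Real.one_lt_rpow_iff_of_pos (by linarith)).mpr (Or.inl ⟨h1, h2⟩)
    linarith
  have ha0 : 0 < a := lt_trans han0 ha
  set x : ℝ := a/2 - v.re with hxdef
  have hbx : b < x := by rw [hxdef]; linarith
  have hx0 : 0 < x := lt_trans hb hbx
  -- roots of unity
  have hprim : IsPrimitiveRoot (Complex.exp (2 * ↑Real.pi * Complex.I / ((2*p+1:ℕ):ℂ))) (2*p+1) :=
    Complex.isPrimitiveRoot_exp (2*p+1) hNne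
  set ζ : ℂ := Complex.exp (2 * ↑Real.pi * Complex.I / ((2*p+1:ℕ):ℂ)) with hζ
  have hζj : ∀ j : ℕ, ζ^j = Complex.exp ((2*Real.pi*j/((2*p+1:ℕ):ℝ) : ℝ) * Complex.I) := by
    intro j
    rw [hζ, ← Complex.exp_nat_mul]
    congr 1
    have hne : ((2*p+1:ℕ):ℂ) ≠ 0 := by exact_mod_cast hNne
    push_cast
    field_simp
  have hre : ∀ j : ℕ, (ζ^j).re = Real.cos (2*Real.pi*j/((2*p+1:ℕ):ℝ)) := fun j => by
    rw [hζj]; exact Complex.exp_ofReal_mul_I_re _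
  have him : ∀ j : ℕ, (ζ^j).im = Real.sin (2*Real.pi*j/((2*p+1:ℕ):ℝ)) := fun j => by
    rw [hζj]; exact Complex.exp_ofReal_mul_I_im _
  have habsζ : ∀ j : ℕ, ‖ζ^j‖ = 1 := fun j => by
    rw [hζj]; exact Complex.norm_exp_ofReal_mul_I _
  have hζne : ∀ j : ℕ, ζ^j ≠ 0 := by
    intro j h
    have := habsζ j
    rw [h] at this
    simp at this
  -- factorization
  have hfact : ∀ X Y : ℂ, X^(2*p+1) - Y^(2*p+1) = ∏ j ∈ Finset.range (2*p+1), (X - ζ^j * Y) := by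
    intro X Y
    rw [hprim.pow_sub_pow_eq_prod_sub_mul X Y hNpos]
    refine (Finset.prod_nbij (fun j => ζ^j) ?_ ?_ ?_ (fun a _ => rfl)).symm
    · intro j _
      rw [Polynomial.mem_nthRootsFinset hNpos, ← pow_mul, mul_comm j, pow_mul,
        hprim.pow_eq_one, one_pow]
    · intro i hi j hj h
      simp only [Finset.coe_range, Set.mem_Iio] at hi hj
      exact hprim.pow_inj hi hj h
    · intro μ hμ
      simp only [Finset.mem_coe, Polynomial.mem_nthRootsFinset hNpos] at hμ
      obtain ⟨i, hi, rfl⟩ := hprim.eq_pow_of_pow_eq_one hμ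
      exact ⟨i, by simpa using hi, rfl⟩
  have hsplit : ‖(v - (a:ℂ))^(2*p+1) - v^(2*p+1)‖
      = a * ∏ k ∈ Finset.Ico 1 (2*p+1), ‖(1-ζ^k)*v - (a:ℂ)‖ := by
    rw [hfact (v - (a:ℂ)) v]
    have h0 : ∏ j ∈ Finset.range (2*p+1), ((v - (a:ℂ)) - ζ^j * v)
        = (-(a:ℂ)) * ∏ k ∈ Finset.Ico 1 (2*p+1), ((1-ζ^k)*v - (a:ℂ)) := by
      rw [Finset.range_eq_Ico,
        ← Finset.prod_Ico_consecutive _ (Nat.zero_le 1) (by omega : 1 ≤ 2*p+1)]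
      congr 1
      · rw [Nat.Ico_zero_eq_range, Finset.prod_range_one, pow_zero]
        ring
      · exact Finset.prod_congr rfl (fun k _ => by ring)
    rw [h0, norm_mul]
    congr 1
    · rw [norm_neg, Complex.norm_real, Real.norm_of_nonneg ha0.le]
    · exact Complex.norm_prod _ _
  -- conjugation
  have hconj : ∀ j, j ≤ 2*p+1 → ζ^(2*p+1-j) = (starRingEnd ℂ) (ζ^j) := by
    intro j hj
    have h1 : ζ^(2*p+1-j) * ζ^j = 1 := by
      rw [← pow_add, Nat.sub_add_cancel hj, hprim.pow_eq_one]
    have hns : Complex.normSq (ζ^j) = 1 := by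
      rw [Complex.normSq_eq_norm_sq, habsζ]; norm_num
    have h2 : (starRingEnd ℂ) (ζ^j) * ζ^j = 1 := by
      rw [mul_comm, Complex.mul_conj, hns, Complex.ofReal_one]
    exact mul_right_cancel₀ (hζne j) (h1.trans h2.symm)
  -- sin positivity
  have hθpos : ∀ j : ℕ, 1 ≤ j → j ≤ p → 0 < Real.sin (2*Real.pi*j/((2*p+1:ℕ):ℝ)) := by
    intro j h1 h2
    have hj0 : (0:ℝ) < (j:ℝ) := by exact_mod_cast h1
    have hjp : (j:ℝ) ≤ (p:ℝ) := by exact_mod_cast h2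
    apply Real.sin_pos_of_pos_of_lt_pi
    · apply div_pos _ hNR
      nlinarith [Real.pi_pos]
    · rw [div_lt_iff₀ hNR]
      push_cast
      nlinarith [Real.pi_pos]
  -- pair bounds
  have hpairs : ∀ j ∈ Finset.Ico 1 (p+1),
      a*x*(2*Real.sin (2*Real.pi*j/((2*p+1:ℕ):ℝ)))
        ≤ ‖(1-ζ^j)*v - (a:ℂ)‖ * ‖(1-ζ^(2*p+1-j))*v - (a:ℂ)‖ := by
    intro j hj
    simp only [Finset.mem_Ico] at hj
    rw [hconj j (by omega)]
    have hpb := pair_bound a x (Real.cos (2*Real.pi*j/((2*p+1:ℕ):ℝ)))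
      (Real.sin (2*Real.pi*j/((2*p+1:ℕ):ℝ))) ha0 hx0.le
      (hθpos j hj.1 (by omega)) (Real.sin_sq_add_cos_sq _) v (ζ^j)
      (by rw [hxdef]; ring) (hre j) (him j)
    calc a*x*(2*Real.sin (2*Real.pi*j/((2*p+1:ℕ):ℝ)))
        = 2*a*x*Real.sin (2*Real.pi*j/((2*p+1:ℕ):ℝ)) := by ring
      _ ≤ _ := hpb
  -- product of sines
  have habs2j : ∀ j : ℕ, 1 ≤ j → j ≤ p →
      ‖1-ζ^(2*j)‖ = 2*Real.sin (2*Real.pi*j/((2*p+1:ℕ):ℝ)) := by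
    intro j h1 h2
    have hs := hθpos j h1 h2
    have hdbl : 2*Real.pi*((2*j:ℕ):ℝ)/((2*p+1:ℕ):ℝ)
        = 2*(2*Real.pi*j/((2*p+1:ℕ):ℝ)) := by push_cast; ring
    rw [Complex.norm_def, Complex.normSq_apply, Complex.sub_re, Complex.sub_im,
      Complex.one_re, Complex.one_im, hre, him, hdbl]
    have hpyth := Real.sin_sq_add_cos_sq (2*Real.pi*j/((2*p+1:ℕ):ℝ))
    have hkey : (1 - Real.cos (2*(2*Real.pi*j/((2*p+1:ℕ):ℝ))))*(1 - Real.cos (2*(2*Real.pi*j/((2*p+1:ℕ):ℝ))))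
        + (0 - Real.sin (2*(2*Real.pi*j/((2*p+1:ℕ):ℝ))))*(0 - Real.sin (2*(2*Real.pi*j/((2*p+1:ℕ):ℝ))))
        = (2*Real.sin (2*Real.pi*j/((2*p+1:ℕ):ℝ)))^2 := by
      rw [Real.cos_two_mul, Real.sin_two_mul]
      nlinarith [hpyth]
    rw [hkey, Real.sqrt_sq (by positivity)]
  have hsym : ∀ j : ℕ, 1 ≤ j → j ≤ p →
      ‖1-ζ^(2*p+1-2*j)‖ = ‖1-ζ^(2*j)‖ := by
    intro j h1 h2
    have hu1 : ζ^(2*p+1-2*j) * ζ^(2*j) = 1 := by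
      rw [← pow_add, Nat.sub_add_cancel (by omega), hprim.pow_eq_one]
    have hmul : (1:ℂ) - ζ^(2*p+1-2*j) = (-ζ^(2*p+1-2*j)) * (1 - ζ^(2*j)) := by
      have expand : (-ζ^(2*p+1-2*j)) * (1 - ζ^(2*j))
          = ζ^(2*p+1-2*j) * ζ^(2*j) - ζ^(2*p+1-2*j) := by ring
      rw [expand, hu1]
    rw [hmul, norm_mul, norm_neg, habsζ, one_mul]
  have hNabs : ((2*p+1:ℕ):ℝ) = ∏ k ∈ Finset.Ico 1 (2*p+1), ‖1-ζ^k‖ := by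
    have hPP := hprim.prod_one_sub_pow_eq_order
    have hIco : ∏ k ∈ Finset.Ico 1 (2*p+1), ((1:ℂ)-ζ^k) = ((2*p+1:ℕ):ℂ) := by
      rw [Finset.prod_Ico_eq_prod_range]
      simp only [Nat.add_sub_cancel]
      rw [Finset.prod_congr rfl (fun i _ => by rw [add_comm 1 i] : 
        ∀ i ∈ Finset.range (2*p), ((1:ℂ) - ζ^(1+i)) = (1 - ζ^(i+1)))]
      rw [hPP]
      push_cast
      ring
    calc ((2*p+1:ℕ):ℝ) = ‖((2*p+1:ℕ):ℂ)‖ := by rw [Complex.norm_natCast]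
      _ = ‖∏ k ∈ Finset.Ico 1 (2*p+1), ((1:ℂ)-ζ^k)‖ := by rw [hIco]
      _ = ∏ k ∈ Finset.Ico 1 (2*p+1), ‖1-ζ^k‖ := Complex.norm_prod _ _
  have hsq : (∏ j ∈ Finset.Ico 1 (p+1), (2*Real.sin (2*Real.pi*j/((2*p+1:ℕ):ℝ))))^2
      = ((2*p+1:ℕ):ℝ) := by
    rw [← Finset.prod_pow]
    have step : ∏ j ∈ Finset.Ico 1 (p+1), (2*Real.sin (2*Real.pi*j/((2*p+1:ℕ):ℝ)))^2
        = ∏ k ∈ Finset.Ico 1 (2*p+1), ‖1-ζ^k‖ := by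
      rw [prod_Ico_even_odd p (fun k => ‖1-ζ^k‖)]
      apply Finset.prod_congr rfl
      intro j hj
      simp only [Finset.mem_Ico] at hj
      rw [hsym j hj.1 (by omega), habs2j j hj.1 (by omega)]
      ring
    rw [step, ← hNabs]
  have hS0 : 0 ≤ ∏ j ∈ Finset.Ico 1 (p+1), (2*Real.sin (2*Real.pi*j/((2*p+1:ℕ):ℝ))) := by
    apply Finset.prod_nonneg
    intro j hj
    simp only [Finset.mem_Ico] at hj
    have := hθpos j hj.1 (by omega)
    linarith
  have hsinprod : ∏ j ∈ Finset.Ico 1 (p+1), (2*Real.sin (2*Real.pi*j/((2*p+1:ℕ):ℝ)))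
      = Real.sqrt ((2*p+1:ℕ):ℝ) := by
    conv_rhs => rw [← hsq]
    rw [Real.sqrt_sq hS0]
  -- main lower bound
  have hprodlow : a * ((a*x)^p * Real.sqrt ((2*p+1:ℕ):ℝ))
      ≤ ‖(v - (a:ℂ))^(2*p+1) - v^(2*p+1)‖ := by
    rw [hsplit]
    apply mul_le_mul_of_nonneg_left _ ha0.le
    rw [prod_Ico_pair p (fun k => ‖(1-ζ^k)*v - (a:ℂ)‖)]
    calc (a*x)^p * Real.sqrt ((2*p+1:ℕ):ℝ)
        = ∏ j ∈ Finset.Ico 1 (p+1), (a*x*(2*Real.sin (2*Real.pi*j/((2*p+1:ℕ):ℝ)))) := by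
          rw [Finset.prod_mul_distrib, Finset.prod_const, Nat.card_Ico, hsinprod]
          simp
      _ ≤ ∏ j ∈ Finset.Ico 1 (p+1),
            (‖(1-ζ^j)*v - (a:ℂ)‖ * ‖(1-ζ^(2*p+1-j))*v - (a:ℂ)‖) := by
          apply Finset.prod_le_prod
          · intro j hj
            simp only [Finset.mem_Ico] at hj
            have := hθpos j hj.1 (by omega)
            positivity
          · exact hpairs
  -- endgame numerics
  have hsq3 : Real.sqrt 3 * Real.sqrt 3 = 3 := Real.mul_self_sqrt (by norm_num)
  have hs3pos : (0:ℝ) < Real.sqrt 3 := Real.sqrt_pos.mpr (by norm_num)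
  have hb3 : b*Real.sqrt 3/3 = b/Real.sqrt 3 := by
    rw [eq_div_iff (ne_of_gt hs3pos)]
    field_simp
    linear_combination hsq3
  have hN3 : ((2*p+1:ℕ):ℝ) ≤ 3^p := by
    have h23 := one_add_mul_le_pow (a := (2:ℝ)) (by norm_num) p
    push_cast
    norm_num at h23
    linarith
  have hsqrt3p : ((Real.sqrt 3)^p)^2 = 3^p := by
    rw [← pow_mul, mul_comm p 2, pow_mul, Real.sq_sqrt (by norm_num : (0:ℝ) ≤ 3)]
  have hsple : Real.sqrt ((2*p+1:ℕ):ℝ) ≤ (Real.sqrt 3)^p := by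
    rw [show ((Real.sqrt 3)^p) = Real.sqrt (3^p) from by
      rw [← hsqrt3p, Real.sqrt_sq (by positivity)]]
    exact Real.sqrt_le_sqrt hN3
  have hNle : ((2*p+1:ℕ):ℝ) ≤ Real.sqrt ((2*p+1:ℕ):ℝ) * (Real.sqrt 3)^p := by
    have h0 : Real.sqrt ((2*p+1:ℕ):ℝ) * Real.sqrt ((2*p+1:ℕ):ℝ) = ((2*p+1:ℕ):ℝ) :=
      Real.mul_self_sqrt (le_of_lt hNR)
    nlinarith [Real.sqrt_nonneg ((2*p+1:ℕ):ℝ)]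
  have hcore : an^(p+1) * b^p < a^(p+1) * x^p := by
    apply mul_lt_mul (pow_lt_pow_left₀ ha han0.le (by omega)) (pow_le_pow_left₀ hb.le hbx.le p)
      (by positivity) (by positivity)
  rw [gt_iff_lt]
  calc (2*(p:ℝ)+1) * an^(p+1) * (b*Real.sqrt 3/3)^p
      = (((2*p+1:ℕ):ℝ) / (Real.sqrt 3)^p) * (an^(p+1) * b^p) := by
        rw [hb3, div_pow]
        push_cast
        ring
    _ ≤ Real.sqrt ((2*p+1:ℕ):ℝ) * (an^(p+1) * b^p) := by
        apply mul_le_mul_of_nonneg_right _ (by positivity)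
        rw [div_le_iff₀ (by positivity)]
        exact hNle
    _ < Real.sqrt ((2*p+1:ℕ):ℝ) * (a^(p+1) * x^p) := by
        apply mul_lt_mul_of_pos_left hcore (Real.sqrt_pos.mpr hNR)
    _ = a * ((a*x)^p * Real.sqrt ((2*p+1:ℕ):ℝ)) := by rw [mul_pow]; ring
    _ ≤ ‖(v - (a:ℂ))^(2*p+1) - v^(2*p+1)‖ := hprodlow
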